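/- Let ψ : R^m → R be differentiable and bounded below by 0, and suppose a sequence {x_k} together with auxiliary values D_k satisfies D_0 = ψ(x_0), D_{k+1} ≤ D_k, ψ(x_k) ≤ D_k, and D_k - D_{k+1} ≥ c‖∇ψ(x_k)‖² for some c > 0 and all k. Then for any ε > 0, there exists k ≤ ⌈ψ(x_0)/(c ε²) + 1⌉ with ‖∇ψ(x_k)‖ ≤ ε. -/
import Mathlib


/-- If `D 0 = ψ(x 0)`, `D` is nonincreasing, `ψ(x k) ≤ D k`, `ψ ≥ 0`, and
`D k - D (k+1) ≥ c ‖∇ψ(x k)‖²`, then for any `ε > 0` there is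
`k ≤ ⌈ψ(x 0)/(c ε²) + 1⌉` with `‖∇ψ(x k)‖ ≤ ε`. -/
theorem lm_iteration_complexity {m : ℕ}
    (ψ : EuclideanSpace ℝ (Fin m) → ℝ) (hψdiff : Differentiable ℝ ψ)
    (hψ0 : ∀ y, 0 ≤ ψ y)
    (x : ℕ → EuclideanSpace ℝ (Fin m)) (D : ℕ → ℝ) (c : ℝ) (hc : 0 < c)
    (hD0 : D 0 = ψ (x 0))
    (hDdec : ∀ k, D (k + 1) ≤ D k)
    (hψD : ∀ k, ψ (x k) ≤ D k)
    (hdec : ∀ k, c * ‖gradient ψ (x k)‖ ^ 2 ≤ D k - D (k + 1))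
    (ε : ℝ) (hε : 0 < ε) :
    ∃ k ≤ ⌈ψ (x 0) / (c * ε ^ 2) + 1⌉₊, ‖gradient ψ (x k)‖ ≤ ε := by
  by_contra h
  push_neg at h
  set N := ⌈ψ (x 0) / (c * ε ^ 2) + 1⌉₊ with hN
  have hcε : 0 < c * ε ^ 2 := by positivity
  -- each step up to N decreases D by at least c ε²
  have hstep : ∀ k ≤ N, D (k + 1) ≤ D k - c * ε ^ 2 := by
    intro k hk
    have h1 := hdec k
    have h2 : c * ε ^ 2 ≤ c * ‖gradient ψ (x k)‖ ^ 2 := by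
      have he := (h k hk).le
      exact mul_le_mul_of_nonneg_left (pow_le_pow_left₀ hε.le he 2) hc.le
    linarith
  have key : ∀ n ≤ N + 1, D n ≤ ψ (x 0) - n * (c * ε ^ 2) := by
    intro n hn
    induction n with
    | zero => simp [hD0]
    | succ k ih =>
      have hk : k ≤ N := Nat.lt_succ_iff.mp hn
      have := hstep k hk
      have := ih (le_trans (Nat.le_succ k) hn)
      push_cast
      linarith
  have h1 := key (N + 1) le_rfl
  have h2 : (0 : ℝ) ≤ D (N + 1) := le_trans (hψ0 _) (hψD _)
  have h3 : ((N : ℝ) + 1) * (c * ε ^ 2) ≤ ψ (x 0) := by push_cast at h1; linarith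
  have h4 : ψ (x 0) / (c * ε ^ 2) + 1 ≤ (N : ℝ) := Nat.le_ceil _
  have h6 : ψ (x 0) / (c * ε ^ 2) * (c * ε ^ 2) = ψ (x 0) :=
    div_mul_cancel₀ _ (ne_of_gt hcε)
  nlinarith [mul_le_mul_of_nonneg_right h4 hcε.le]
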